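/- Let π be the fixed point of g(x) = (λ/d) α(((λ+q)/d − x)I − T)^{-1} t in the variable x = π t, with 0 < π t < λ/d. Then g'(π t) = π(((λ+q)/d − π t)I − T)^{-1} t, and if π·1 ≤ 1 and π t > 0 this derivative lies in (0, 1). -/

import Mathlib

open Matrix
open scoped NNReal

attribute [local instance] Matrix.linftyOpNormedRing Matrix.linftyOpNormedAlgebra

private lemma pow_entry_nonneg {n : ℕ} (A : Matrix (Fin n) (Fin n) ℝ)
    (hA : ∀ i j, 0 ≤ A i j) (k : ℕ) : ∀ i j, 0 ≤ (A ^ k) i j := by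
  induction k with
  | zero =>
    intro i j
    rw [pow_zero, Matrix.one_apply]
    split <;> norm_num
  | succ k ih =>
    intro i j
    rw [pow_succ, Matrix.mul_apply]
    exact Finset.sum_nonneg fun l _ => mul_nonneg (ih i l) (hA l j)

private lemma mmatrix {n : ℕ} (s : ℝ) (hs : 0 < s) (T : Matrix (Fin n) (Fin n) ℝ)
    (hoff : ∀ i j, i ≠ j → 0 ≤ T i j) (hrow : ∀ i, ∑ j, T i j ≤ 0) :
    IsUnit (s • (1 : Matrix (Fin n) (Fin n) ℝ) - T) ∧
      (∀ i j, 0 ≤ (s • (1 : Matrix (Fin n) (Fin n) ℝ) - T)⁻¹ i j) ∧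
      ∀ i, 0 < (s • (1 : Matrix (Fin n) (Fin n) ℝ) - T)⁻¹ i i := by
  set M : Matrix (Fin n) (Fin n) ℝ := s • 1 - T with hM
  set β : ℝ := s + (∑ i, |T i i|) + 1 with hβ
  have hβ0 : 0 < β := by
    have : (0:ℝ) ≤ ∑ i, |T i i| := Finset.sum_nonneg fun i _ => abs_nonneg _
    linarith
  set A : Matrix (Fin n) (Fin n) ℝ := 1 - β⁻¹ • M with hA
  have hMij : ∀ i j, M i j = s * (if i = j then 1 else 0) - T i j := by
    intro i j
    simp [hM, Matrix.sub_apply, Matrix.smul_apply, Matrix.one_apply]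
  have hAij : ∀ i j, A i j = (if i = j then 1 else 0) - β⁻¹ * M i j := by
    intro i j
    simp [hA, Matrix.sub_apply, Matrix.smul_apply, Matrix.one_apply]
  have hTiile : ∀ i, s - T i i ≤ β := by
    intro i
    have h1 : -T i i ≤ |T i i| := neg_le_abs _
    have h2 : |T i i| ≤ ∑ j, |T j j| :=
      Finset.single_le_sum (f := fun j => |T j j|) (fun j _ => abs_nonneg _) (Finset.mem_univ i)
    rw [hβ]; linarith
  have hA0 : ∀ i j, 0 ≤ A i j := by
    intro i j
    rw [hAij, hMij]
    by_cases h : i = j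
    · simp only [h, if_pos rfl]
      have := hTiile j
      have h3 : β⁻¹ * (s * 1 - T j j) ≤ β⁻¹ * β :=
        mul_le_mul_of_nonneg_left (by linarith) (by positivity)
      rw [inv_mul_cancel₀ hβ0.ne'] at h3
      simp only [if_true]
      linarith
    · simp only [if_neg h]
      have := hoff i j h
      have : 0 ≤ β⁻¹ * T i j := by positivity
      simp only [mul_zero, zero_sub, mul_sub]
      linarith
  have hrowA : ∀ i, ∑ j, A i j ≤ 1 - β⁻¹ * s := by
    intro i
    have hMrow : s ≤ ∑ j, M i j := by
      have : ∑ j, M i j = s - ∑ j, T i j := by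
        simp_rw [hMij, Finset.sum_sub_distrib, ← Finset.mul_sum]
        simp [Finset.sum_ite_eq]
      rw [this]
      linarith [hrow i]
    have : ∑ j, A i j = 1 - β⁻¹ * ∑ j, M i j := by
      simp_rw [hAij, Finset.sum_sub_distrib, ← Finset.mul_sum]
      simp [Finset.sum_ite_eq]
    rw [this]
    have := mul_le_mul_of_nonneg_left hMrow (le_of_lt (inv_pos.mpr hβ0))
    linarith
  have hAn : ‖A‖ < 1 := by
    rw [Matrix.linfty_opNorm_def]
    have hkey : ∀ i : Fin n, (∑ j, ‖A i j‖₊ : ℝ≥0) < 1 := by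
      intro i
      rw [← NNReal.coe_lt_coe]
      push_cast
      have : ∀ j, (‖A i j‖ : ℝ) = A i j := fun j => Real.norm_of_nonneg (hA0 i j)
      calc (∑ j, ‖A i j‖) = ∑ j, A i j := by simp_rw [this]
        _ ≤ 1 - β⁻¹ * s := hrowA i
        _ < 1 := by
            have : 0 < β⁻¹ * s := by positivity
            linarith
    have : ((Finset.univ : Finset (Fin n)).sup fun i => ∑ j, ‖A i j‖₊) < 1 :=
      Finset.sup_lt_iff (by norm_num) |>.mpr fun i _ => hkey i
    exact_mod_cast this
  have hS : HasSum (fun k : ℕ => A ^ k) (Ring.inverse (1 - A)) :=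
    hasSum_geom_series_inverse A hAn
  have h1A : (1 : Matrix (Fin n) (Fin n) ℝ) - A = β⁻¹ • M := by
    rw [hA, sub_sub_cancel]
  have hRinv : (1 - A) * Ring.inverse (1 - A) = 1 :=
    Ring.mul_inverse_cancel _ (isUnit_one_sub_of_norm_lt_one hAn)
  have hMB : M * (β⁻¹ • Ring.inverse (1 - A)) = 1 := by
    rw [mul_smul_comm, ← smul_mul_assoc, ← h1A, hRinv]
  have hunit : IsUnit M := (Matrix.isUnit_iff_isUnit_det M).mpr
    (Matrix.isUnit_det_of_right_inverse hMB)
  have hMinv : M⁻¹ = β⁻¹ • Ring.inverse (1 - A) := Matrix.inv_eq_right_inv hMB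
  have hentry : ∀ i j, HasSum (fun k : ℕ => (A ^ k) i j) (Ring.inverse (1 - A) i j) := by
    intro i j
    let L : Matrix (Fin n) (Fin n) ℝ →ₗ[ℝ] ℝ :=
      { toFun := fun B => B i j, map_add' := fun _ _ => rfl, map_smul' := fun _ _ => rfl }
    exact hS.mapL (LinearMap.toContinuousLinearMap L)
  have hnn : ∀ i j, 0 ≤ Ring.inverse (1 - A) i j := fun i j =>
    (hentry i j).nonneg fun k => pow_entry_nonneg A hA0 k i j
  have hdg : ∀ i, 1 ≤ Ring.inverse (1 - A) i i := by
    intro i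
    have h0 : (A ^ 0) i i = 1 := by simp [Matrix.one_apply]
    have := le_hasSum (hentry i i) 0 (fun k _ => pow_entry_nonneg A hA0 k i i)
    rwa [h0] at this
  refine ⟨hunit, ?_, ?_⟩
  · intro i j; rw [hMinv]; simp only [Matrix.smul_apply, smul_eq_mul]
    exact mul_nonneg (by positivity) (hnn i j)
  · intro i; rw [hMinv]; simp only [Matrix.smul_apply, smul_eq_mul]
    have := hdg i
    have hβi : 0 < β⁻¹ := inv_pos.mpr hβ0
    nlinarith

theorem stmt15 (n : ℕ) (d lam q : ℝ) (hd : 0 < d) (hlam : 0 < lam) (hq : 0 ≤ q)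
    (T : Matrix (Fin n) (Fin n) ℝ)
    (hoff : ∀ i j, i ≠ j → 0 ≤ T i j) (hrow : ∀ i, ∑ j, T i j ≤ 0)
    (heig : ∀ μ ∈ spectrum ℂ (T.map (Complex.ofReal : ℝ → ℂ)), μ.re < 0)
    (α : Fin n → ℝ) (hα0 : ∀ i, 0 ≤ α i) (hα1 : ∑ i, α i = 1)
    (t : Fin n → ℝ) (ht : t = (-T).mulVec 1)
    (g : ℝ → ℝ)
    (hg : ∀ x : ℝ, g x = (lam / d) *
      (α ⬝ᵥ ((((lam + q) / d - x) • (1 : Matrix (Fin n) (Fin n) ℝ) - T)⁻¹.mulVec t)))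
    (π : Fin n → ℝ) (hπ0 : ∀ i, 0 ≤ π i)
    (hπt1 : 0 < π ⬝ᵥ t) (hπt2 : π ⬝ᵥ t < lam / d)
    (hfix : g (π ⬝ᵥ t) = π ⬝ᵥ t)
    (hchar : lam • Matrix.vecMul α
      (((lam + q) / d - π ⬝ᵥ t) • (1 : Matrix (Fin n) (Fin n) ℝ) - T)⁻¹ = d • π) :
    deriv g (π ⬝ᵥ t) =
      π ⬝ᵥ ((((lam + q) / d - π ⬝ᵥ t) • (1 : Matrix (Fin n) (Fin n) ℝ) - T)⁻¹.mulVec t) ∧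
    ((∑ i, π i) ≤ 1 → 0 < deriv g (π ⬝ᵥ t) ∧ deriv g (π ⬝ᵥ t) < 1) := by
  classical
  have hs : 0 < (lam + q) / d - π ⬝ᵥ t := by
    have h1 : lam / d ≤ (lam + q) / d := by
      rw [div_le_div_iff₀ hd hd]; nlinarith
    linarith
  obtain ⟨hu, hinv0, hdiag⟩ := mmatrix _ hs T hoff hrow
  set x₀ : ℝ := π ⬝ᵥ t with hx₀
  set M₀ : Matrix (Fin n) (Fin n) ℝ :=
    ((lam + q) / d - x₀) • (1 : Matrix (Fin n) (Fin n) ℝ) - T with hM₀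
  set m : ℝ → Matrix (Fin n) (Fin n) ℝ :=
    fun x => ((lam + q) / d - x) • (1 : Matrix (Fin n) (Fin n) ℝ) - T with hm
  have hmx₀ : m x₀ = M₀ := rfl
  -- derivative of m
  have hmder : HasDerivAt m (-(1 : Matrix (Fin n) (Fin n) ℝ)) x₀ := by
    have h1 : HasDerivAt (fun x : ℝ => (lam + q) / d - x) (-1) x₀ :=
      (hasDerivAt_id x₀).const_sub ((lam + q) / d)
    have h2 := (h1.smul_const (1 : Matrix (Fin n) (Fin n) ℝ)).sub_const T
    refine h2.congr_deriv ?_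
    simp
  -- derivative of the resolvent
  have hinvder : HasDerivAt (fun x => Ring.inverse (m x)) (M₀⁻¹ * M₀⁻¹) x₀ := by
    have h4 : HasFDerivAt Ring.inverse
        (-ContinuousLinearMap.mulLeftRight ℝ (Matrix (Fin n) (Fin n) ℝ)
          (↑hu.unit⁻¹) (↑hu.unit⁻¹)) (m x₀) := by
      have h6 := hasFDerivAt_ringInverse (𝕜 := ℝ) hu.unit
      rwa [hu.unit_spec] at h6
    have h5 := h4.comp_hasDerivAt x₀ hmder
    refine h5.congr_deriv ?_
    simp only [ContinuousLinearMap.neg_apply, ContinuousLinearMap.mulLeftRight_apply,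
      Matrix.coe_units_inv, hu.unit_spec, mul_neg, mul_one, neg_neg, neg_mul]
  -- rewrite g
  have hgeq : g = fun x => (lam / d) * (α ⬝ᵥ (Ring.inverse (m x)).mulVec t) := by
    funext x
    rw [hg x, ← Matrix.nonsing_inv_eq_ringInverse]
  let Lg : Matrix (Fin n) (Fin n) ℝ →ₗ[ℝ] ℝ :=
    { toFun := fun B => (lam / d) * (α ⬝ᵥ B.mulVec t),
      map_add' := by
        intro B C
        simp [Matrix.add_mulVec, dotProduct_add, mul_add]
      map_smul' := by
        intro r B
        simp [Matrix.smul_mulVec, smul_dotProduct]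
        ring }
  have hgder : HasDerivAt g (Lg (M₀⁻¹ * M₀⁻¹)) x₀ := by
    rw [hgeq]
    exact (LinearMap.toContinuousLinearMap Lg).hasFDerivAt.comp_hasDerivAt x₀ hinvder
  have hval : Lg (M₀⁻¹ * M₀⁻¹) = π ⬝ᵥ M₀⁻¹.mulVec t := by
    show (lam / d) * (α ⬝ᵥ (M₀⁻¹ * M₀⁻¹).mulVec t) = _
    rw [← Matrix.mulVec_mulVec, Matrix.dotProduct_mulVec]
    have h1 : (lam • Matrix.vecMul α M₀⁻¹) ⬝ᵥ (M₀⁻¹.mulVec t) =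
        (d • π) ⬝ᵥ (M₀⁻¹.mulVec t) := by rw [hchar]
    rw [smul_dotProduct, smul_dotProduct] at h1
    rw [div_mul_eq_mul_div]
    rw [show lam * (Matrix.vecMul α M₀⁻¹ ⬝ᵥ M₀⁻¹.mulVec t) = lam • (Matrix.vecMul α M₀⁻¹ ⬝ᵥ M₀⁻¹.mulVec t) from rfl, h1]
    rw [smul_eq_mul, mul_div_cancel_left₀ _ hd.ne']
  have hderiv : deriv g x₀ = π ⬝ᵥ M₀⁻¹.mulVec t := by rw [hgder.deriv, hval]
  -- positivity data
  have ht0 : ∀ i, 0 ≤ t i := by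
    intro i
    have h2 : t i = -∑ j, T i j := by
      rw [ht]
      simp [Matrix.mulVec, dotProduct, Matrix.neg_apply]
    rw [h2]
    linarith [hrow i]
  have hex : ∃ i, 0 < π i * t i := by
    by_contra hcon
    push_neg at hcon
    have h3 : π ⬝ᵥ t ≤ 0 := Finset.sum_nonpos fun i _ => hcon i
    rw [← hx₀] at h3
    linarith
  obtain ⟨i0, hi0⟩ := hex
  have hπi0 : 0 < π i0 := by
    rcases mul_pos_iff.mp hi0 with ⟨h1, _⟩ | ⟨h1, _⟩
    · exact h1
    · linarith [hπ0 i0]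
  have hti0 : 0 < t i0 := by
    rcases mul_pos_iff.mp hi0 with ⟨_, h1⟩ | ⟨_, h1⟩
    · exact h1
    · linarith [ht0 i0]
  have hwdef : ∀ i, (M₀⁻¹.mulVec t) i = ∑ j, M₀⁻¹ i j * t j := fun i => rfl
  have hw0 : ∀ i, 0 ≤ (M₀⁻¹.mulVec t) i := by
    intro i
    rw [hwdef]
    exact Finset.sum_nonneg fun j _ => mul_nonneg (hinv0 i j) (ht0 j)
  have hwi0 : 0 < (M₀⁻¹.mulVec t) i0 := by
    rw [hwdef]
    have h1 : M₀⁻¹ i0 i0 * t i0 ≤ ∑ j, M₀⁻¹ i0 j * t j :=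
      Finset.single_le_sum (f := fun j => M₀⁻¹ i0 j * t j)
        (fun j _ => mul_nonneg (hinv0 i0 j) (ht0 j)) (Finset.mem_univ i0)
    nlinarith [mul_pos (hdiag i0) hti0]
  have hlow : 0 < π ⬝ᵥ M₀⁻¹.mulVec t := by
    have h1 : π i0 * (M₀⁻¹.mulVec t) i0 ≤ ∑ j, π j * (M₀⁻¹.mulVec t) j :=
      Finset.single_le_sum (f := fun j => π j * (M₀⁻¹.mulVec t) j)
        (fun j _ => mul_nonneg (hπ0 j) (hw0 j)) (Finset.mem_univ i0)
    have h2 : 0 < π i0 * (M₀⁻¹.mulVec t) i0 := mul_pos hπi0 hwi0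
    show 0 < ∑ j, π j * (M₀⁻¹.mulVec t) j
    linarith
  refine ⟨hderiv, fun hsum => ?_⟩
  rw [hderiv]
  refine ⟨hlow, ?_⟩
  -- upper bound
  have hdet : IsUnit M₀.det := (Matrix.isUnit_iff_isUnit_det M₀).mp hu
  have hMM : M₀⁻¹ * M₀ = 1 := Matrix.nonsing_inv_mul M₀ hdet
  have hM1 : M₀ *ᵥ (1 : Fin n → ℝ) = ((lam + q) / d - x₀) • (1 : Fin n → ℝ) + t := by
    rw [hM₀, Matrix.sub_mulVec, Matrix.smul_mulVec, Matrix.one_mulVec, ht,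
      Matrix.neg_mulVec, sub_eq_add_neg]
  have hone : (1 : Fin n → ℝ) =
      ((lam + q) / d - x₀) • (M₀⁻¹ *ᵥ (1 : Fin n → ℝ)) + M₀⁻¹ *ᵥ t := by
    calc (1 : Fin n → ℝ) = (M₀⁻¹ * M₀) *ᵥ (1 : Fin n → ℝ) := by
          rw [hMM, Matrix.one_mulVec]
      _ = M₀⁻¹ *ᵥ (M₀ *ᵥ (1 : Fin n → ℝ)) := by rw [Matrix.mulVec_mulVec]
      _ = _ := by rw [hM1, Matrix.mulVec_add, Matrix.mulVec_smul]
  have hwlt : ∀ j, (M₀⁻¹.mulVec t) j < 1 := by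
    intro j
    have h1 := congrFun hone j
    have h2 : 0 < (M₀⁻¹ *ᵥ (1 : Fin n → ℝ)) j := by
      have h3 : (M₀⁻¹ *ᵥ (1 : Fin n → ℝ)) j = ∑ k, M₀⁻¹ j k * 1 := rfl
      rw [h3]
      have h4 : M₀⁻¹ j j * 1 ≤ ∑ k, M₀⁻¹ j k * 1 :=
        Finset.single_le_sum (f := fun k => M₀⁻¹ j k * 1)
          (fun k _ => mul_nonneg (hinv0 j k) zero_le_one) (Finset.mem_univ j)
      nlinarith [hdiag j]
    simp only [Pi.add_apply, Pi.smul_apply, Pi.one_apply, smul_eq_mul] at h1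
    nlinarith
  have hfin : ∑ j, π j * (M₀⁻¹.mulVec t) j < ∑ j, π j := by
    refine Finset.sum_lt_sum (fun j _ => ?_) ⟨i0, Finset.mem_univ i0, ?_⟩
    · nlinarith [hπ0 j, hwlt j, hw0 j]
    · nlinarith [hwlt i0]
  show (∑ j, π j * (M₀⁻¹.mulVec t) j) < 1
  linarith
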